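/- There exists a function f : ℕ^ℕ → ℕ (regarded as a real-valued function on the Baire space ℕ^ℕ) such that Player I has a winning strategy in the game Γ(f) on the full tree of finite sequences of natural numbers, and for each r ∈ ℝ and each Cantor set C ⊆ ℕ^ℕ, the set C ∩ {x ∈ ℕ^ℕ : f(x) ≥ r} is uncountable. -/

import Mathlib

open Filter Topology

/-- The initial segment `(x₀, …, x_{n-1})` of an infinite sequence `x`. -/
def initSeg {β : Type*} (x : ℕ → β) (n : ℕ) : List β :=
  List.ofFn fun i : Fin n => x i

/-- `T` is a pruned tree on `A`: it contains the empty sequence, is closed under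
prefixes, and every element has a proper extension in `T`. -/
def IsPrunedTree {A : Type*} (T : Set (List A)) : Prop :=
  [] ∈ T ∧ (∀ s ∈ T, ∀ t : List A, t <+: s → t ∈ T) ∧ ∀ s ∈ T, ∃ a : A, s ++ [a] ∈ T

/-- The space `X` of infinite branches of the tree `T`, topologized as a subspace of
the product `ℕ → A` (with `A` discrete); this is exactly the cylinder-set topology. -/
abbrev Branches {A : Type*} (T : Set (List A)) : Type _ :=
  {x : ℕ → A // ∀ n : ℕ, initSeg x n ∈ T}

/-- The cylinder set `O(s)` of all branches with initial segment `s`. -/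
def cyl {A : Type*} (T : Set (List A)) (s : List A) : Set (Branches T) :=
  {x | initSeg x.val s.length = s}

/-- `f : X → ℝ` is a limsup function: there is `u` defined on finite sequences with
`f x = limsup_{t → ∞} u (x₀, …, x_t)` for every branch `x` (the limsup being computed
in the extended reals and required to equal the real number `f x`). -/
def IsLimsupFunction {A : Type*} {T : Set (List A)} (f : Branches T → ℝ) : Prop :=
  ∃ u : List A → ℝ, ∀ x : Branches T,
    (f x : EReal) = Filter.limsup (fun t : ℕ => (u (initSeg x.val (t + 1)) : EReal)) Filter.atTop

/-- `f` is of Baire class 1: a pointwise limit of continuous functions. -/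
def BaireClassOne {X : Type*} [TopologicalSpace X] (f : X → ℝ) : Prop :=
  ∃ g : ℕ → X → ℝ, (∀ n, Continuous (g n)) ∧
    ∀ x, Filter.Tendsto (fun n => g n x) Filter.atTop (nhds (f x))

/-- A Cantor set: a subset homeomorphic to the Cantor space `2^ℕ`. -/
def IsCantorSet {X : Type*} [TopologicalSpace X] (C : Set X) : Prop :=
  Nonempty (C ≃ₜ (ℕ → Bool))

/-- A Bernstein set: neither it nor its complement contains a nonempty perfect set. -/
def IsBernsteinSet {X : Type*} [TopologicalSpace X] (B : Set X) : Prop :=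
  ∀ P : Set X, Perfect P → P.Nonempty → ¬ P ⊆ B ∧ ¬ P ⊆ Bᶜ

/-- A co-analytic set: the complement of an analytic set. -/
def IsCoanalytic {X : Type*} [TopologicalSpace X] (s : Set X) : Prop :=
  MeasureTheory.AnalyticSet sᶜ

/-- The sequence of moves produced by Player I's strategy `σ` against the sequence `v`
of moves of Player II: Player I's `n`-th move depends on `(v₀, …, v_{n-1})`. -/
def playI {A M : Type*} (σ : List M → A) (v : ℕ → M) : ℕ → A :=
  fun n => σ (initSeg v n)

/-- Player II has a winning strategy in the game `Γ(f)`: a strategy for Player II assigns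
to each position `(x₀, …, x_t)` of moves of Player I a real number `v_t` (Player II's own
previous moves being determined), and it is winning if for every run, i.e. every branch
`x` that Player I may produce, `f x = limsup_{t → ∞} v_t`. -/
def PlayerIIWinsGamma {A : Type*} {T : Set (List A)} (f : Branches T → ℝ) : Prop :=
  ∃ τ : List A → ℝ, ∀ x : Branches T,
    (f x : EReal) = Filter.limsup (fun t : ℕ => (τ (initSeg x.val (t + 1)) : EReal)) Filter.atTop

/-- Player I has a winning strategy in the game `Γ_R(f)` where Player II's moves are
restricted to `R`: a strategy for Player I assigns to each position `(v₀, …, v_{n-1})` of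
moves of Player II a point of `A`, and it is winning if against every sequence of moves
of Player II in `R` the moves of Player I are legal (all initial segments lie in `T`) and
the resulting branch `x` satisfies `f x ≠ limsup_{t → ∞} v_t`. -/
def PlayerIWinsGammaR {A : Type*} {T : Set (List A)} (R : Set ℝ) (f : Branches T → ℝ) :
    Prop :=
  ∃ σ : List ℝ → A, ∀ v : ℕ → ℝ, (∀ t, v t ∈ R) →
    ∃ h : ∀ n : ℕ, initSeg (playI σ v) n ∈ T,
      (f ⟨playI σ v, h⟩ : EReal) ≠ Filter.limsup (fun t : ℕ => (v t : EReal)) Filter.atTop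

/-- Player I has a winning strategy in the game `Γ(f)`. -/
def PlayerIWinsGamma {A : Type*} {T : Set (List A)} (f : Branches T → ℝ) : Prop :=
  ∃ σ : List ℝ → A, ∀ v : ℕ → ℝ,
    ∃ h : ∀ n : ℕ, initSeg (playI σ v) n ∈ T,
      (f ⟨playI σ v, h⟩ : EReal) ≠ Filter.limsup (fun t : ℕ => (v t : EReal)) Filter.atTop

/-- Player II has a winning strategy in the game `Γ'(f)`, in which Player II's moves are
pairs `(v_t, w_t)` of reals and Player II wins a run iff
`f x = limsup_{t → ∞} v_t = liminf_{t → ∞} w_t`. -/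
def PlayerIIWinsGamma' {A : Type*} {T : Set (List A)} (f : Branches T → ℝ) : Prop :=
  ∃ τ : List A → ℝ × ℝ, ∀ x : Branches T,
    (f x : EReal) =
      Filter.limsup (fun t : ℕ => ((τ (initSeg x.val (t + 1))).1 : EReal)) Filter.atTop ∧
    (f x : EReal) =
      Filter.liminf (fun t : ℕ => ((τ (initSeg x.val (t + 1))).2 : EReal)) Filter.atTop

/-- Player I has a winning strategy in the game `Γ'(f)`. -/
def PlayerIWinsGamma' {A : Type*} {T : Set (List A)} (f : Branches T → ℝ) : Prop :=
  ∃ σ : List (ℝ × ℝ) → A, ∀ v : ℕ → ℝ × ℝ,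
    ∃ h : ∀ n : ℕ, initSeg (playI σ v) n ∈ T,
      ¬ ((f ⟨playI σ v, h⟩ : EReal) =
            Filter.limsup (fun t : ℕ => ((v t).1 : EReal)) Filter.atTop ∧
         (f ⟨playI σ v, h⟩ : EReal) =
            Filter.liminf (fun t : ℕ => ((v t).2 : EReal)) Filter.atTop)


section AuxiliaryLemmas

open Cardinal in
/-- Injective choice: from a family of sets each of cardinality at least that of the
index type, one can choose pairwise distinct representatives. -/
lemma exists_injective_choice {ι X : Type} (C : ι → Set X)
    (h : ∀ i, #ι ≤ #(C i)) : ∃ f : ι → X, Function.Injective f ∧ ∀ i, f i ∈ C i := by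
  classical
  set κ := #ι with hκ
  obtain ⟨e⟩ : Nonempty (ι ≃ κ.ord.ToType) := by
    rw [← Cardinal.eq, Cardinal.mk_ord_toType]
  set α := κ.ord.ToType with hα
  have wf : WellFounded ((· < ·) : α → α → Prop) := IsWellFounded.wf
  have key : ∀ (a : α) (ih : ∀ b : α, b < a → X),
      (C (e.symm a) \ Set.range (fun p : {b : α // b < a} => ih p.1 p.2)).Nonempty := by
    intro a ih
    rw [Set.nonempty_iff_ne_empty]
    intro hemp
    rw [Set.diff_eq_empty] at hemp
    have h1 : #(C (e.symm a)) ≤ #{b : α // b < a} :=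
      (Cardinal.mk_le_mk_of_subset hemp).trans (Cardinal.mk_range_le)
    have h2 : #{b : α // b < a} < κ := by
      exact Cardinal.mk_Iio_ord_toType a
    exact absurd ((h _).trans h1) (not_le.mpr h2)
  let F : ∀ a : α, (∀ b : α, b < a → X) → X := fun a ih => (key a ih).choose
  let g : α → X := wf.fix F
  have hg : ∀ a, g a = F a (fun b _ => g b) := fun a => wf.fix_eq F a
  have spec : ∀ a : α, g a ∈ C (e.symm a) \
      Set.range (fun p : {b : α // b < a} => g p.1) := by
    intro a
    have := (key a (fun b _ => g b)).choose_spec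
    rw [hg a]
    exact this
  refine ⟨fun i => g (e i), ?_, fun i => by simpa using (spec (e i)).1⟩
  intro i j hij
  by_contra hne
  have hne' : e i ≠ e j := fun hh => hne (e.injective hh)
  rcases hne'.lt_or_gt with hlt | hlt
  · exact (spec (e j)).2 ⟨⟨e i, hlt⟩, hij⟩
  · exact (spec (e i)).2 ⟨⟨e j, hlt⟩, hij.symm⟩

/-- Player I's strategy: answer the last move `v` of Player II with `⌈v⌉₊`. -/
noncomputable def mySigma : List ℝ → ℕ := fun l => ⌈l.getD (l.length - 1) 0⌉₊

lemma playI_mySigma (v : ℕ → ℝ) (t : ℕ) : playI mySigma v (t + 1) = ⌈v t⌉₊ := by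
  unfold playI mySigma initSeg
  have h1 : (List.ofFn fun i : Fin (t+1) => v i).length = t + 1 := List.length_ofFn
  rw [h1]
  simp only [Nat.add_sub_cancel]
  rw [List.getD_eq_getElem _ _ (by rw [h1]; omega), List.getElem_ofFn]

end AuxiliaryLemmas

/-- There is an `ℕ`-valued function `f` on the Baire space `ℕ^ℕ` (the branches of the full
tree of finite sequences of naturals) such that Player I has a winning strategy in `Γ(f)`
and `C ∩ {f ≥ r}` is uncountable for every `r ∈ ℝ` and every Cantor set `C ⊆ ℕ^ℕ`. -/
theorem exists_nat_valued_playerI_wins_uncountable :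
    ∃ f : Branches (Set.univ : Set (List ℕ)) → ℝ,
      (∀ x, ∃ n : ℕ, f x = n) ∧
      PlayerIWinsGamma f ∧
      ∀ (r : ℝ) (C : Set (Branches (Set.univ : Set (List ℕ)))),
        IsCantorSet C → ¬ (C ∩ {x | r ≤ f x}).Countable := by
  classical
  set X := Branches (Set.univ : Set (List ℕ)) with hXdef
  have hXc : Cardinal.mk X = Cardinal.continuum := by
    have e : X ≃ (ℕ → ℕ) := Equiv.subtypeUnivEquiv (fun x n => Set.mem_univ _)
    rw [Cardinal.mk_congr e, ← Cardinal.power_def, Cardinal.mk_nat,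
      Cardinal.aleph0_power_aleph0]
  have hBoolc : Cardinal.mk (ℕ → Bool) = Cardinal.continuum := by
    rw [← Cardinal.power_def, Cardinal.mk_bool, Cardinal.mk_nat, Cardinal.two_power_aleph0]
  have hCantorCard : ∀ C : Set X, IsCantorSet C → Cardinal.mk C = Cardinal.continuum := by
    intro C hC
    obtain ⟨e⟩ := hC
    rw [Cardinal.mk_congr e.toEquiv, hBoolc]
  -- there are at most continuum many Cantor subsets of `X`
  have hfewCantor : Cardinal.mk {C : Set X // IsCantorSet C} ≤ Cardinal.continuum := by
    obtain ⟨D, Dcnt, Ddense⟩ := TopologicalSpace.exists_countable_dense (ℕ → Bool)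
    set g : {C : Set X // IsCantorSet C} → (ℕ → Bool) → X :=
      fun C => fun y => ((Classical.choice C.2).symm y : X) with hgdef
    have hgcont : ∀ C, Continuous (g C) :=
      fun C => continuous_subtype_val.comp (Classical.choice C.2).symm.continuous
    have hgrange : ∀ C, Set.range (g C) = C.1 := by
      intro C
      ext x
      constructor
      · rintro ⟨y, rfl⟩
        exact ((Classical.choice C.2).symm y).2
      · intro hx
        exact ⟨(Classical.choice C.2) ⟨x, hx⟩, by
          rw [hgdef]
          simp⟩
    have hginj : Function.Injective (fun C => (fun d : D => g C d.1)) := by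
      intro C C' hCC
      have : g C = g C' := by
        refine Continuous.ext_on Ddense (hgcont C) (hgcont C') ?_
        intro y hy
        exact congrFun hCC ⟨y, hy⟩
      apply Subtype.ext
      rw [← hgrange C, ← hgrange C', this]
    refine (Cardinal.mk_le_of_injective hginj).trans ?_
    rw [← Cardinal.power_def, hXc]
    calc Cardinal.continuum ^ Cardinal.mk D ≤ Cardinal.continuum ^ Cardinal.aleph0 := by
          refine Cardinal.power_le_power_left Cardinal.continuum_ne_zero ?_
          exact Cardinal.mk_le_aleph0_iff.mpr Dcnt.to_subtype
      _ = Cardinal.continuum := Cardinal.continuum_power_aleph0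
  -- the index type for the injective choice
  set ι : Type := {C : Set X // IsCantorSet C} × ℕ × (ℕ → Bool) with hιdef
  have hιcard : Cardinal.mk ι ≤ Cardinal.continuum := by
    rw [hιdef]
    have h2 : Cardinal.mk (ℕ × (ℕ → Bool)) ≤ Cardinal.continuum := by
      rw [Cardinal.mk_prod, Cardinal.lift_id, Cardinal.lift_id, Cardinal.mk_nat, hBoolc]
      exact (Cardinal.mul_le_max _ _).trans (by
        simp [Cardinal.aleph0_le_continuum])
    rw [Cardinal.mk_prod, Cardinal.lift_id, Cardinal.lift_id]
    exact (Cardinal.mul_le_max _ _).trans (by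
      simp [Cardinal.aleph0_le_continuum, hfewCantor, h2])
  obtain ⟨FF, FFinj, FFmem⟩ := exists_injective_choice (fun p : ι => p.1.1)
    (fun p => hιcard.trans (hCantorCard _ p.1.2).ge)
  -- the "index" part of the function
  set idx : X → ℕ := fun x => if h : ∃ p, FF p = x then (Classical.choose h).2.1 else 0
    with idx_def
  have idx_FF : ∀ p : ι, idx (FF p) = p.2.1 := by
    intro p
    have h : ∃ q, FF q = FF p := ⟨p, rfl⟩
    rw [idx_def]
    simp only [dif_pos h]
    rw [FFinj (Classical.choose_spec h)]
  set Fn : X → ℕ := fun x =>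
    idx x + (if _ : BddAbove (Set.range x.1) then sSup (Set.range x.1) + 1 else 0)
    with Fn_def
  refine ⟨fun x => (Fn x : ℝ), fun x => ⟨Fn x, rfl⟩, ?_, ?_⟩
  · -- Player I wins
    refine ⟨mySigma, fun v => ?_⟩
    refine ⟨fun n => Set.mem_univ _, ?_⟩
    set xb : X := ⟨playI mySigma v, fun n => Set.mem_univ _⟩ with hxb
    have hxb1 : xb.1 = playI mySigma v := rfl
    by_cases hb : BddAbove (Set.range (playI mySigma v))
    · set B := sSup (Set.range (playI mySigma v)) with hB
      have hxle : ∀ t, (v t : EReal) ≤ ((B : ℝ) : EReal) := by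
        intro t
        have h1 : v t ≤ (⌈v t⌉₊ : ℝ) := Nat.le_ceil _
        have h2 : ⌈v t⌉₊ ≤ B := by
          rw [← playI_mySigma v t]
          exact le_csSup hb ⟨t + 1, rfl⟩
        have h3 : v t ≤ (B : ℝ) := h1.trans (by exact_mod_cast h2)
        exact_mod_cast h3
      have hls : Filter.limsup (fun t : ℕ => (v t : EReal)) Filter.atTop ≤ ((B : ℝ) : EReal) :=
        Filter.limsup_le_of_le (by isBoundedDefault) (Filter.Eventually.of_forall hxle)
      have hFnB : B < Fn xb := by
        rw [Fn_def]
        simp only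
        rw [dif_pos hb, hB]
        exact Nat.lt_of_lt_of_le (Nat.lt_succ_self _) (Nat.le_add_left _ _)
      have hlt : ((B : ℝ) : EReal) < (((Fn xb : ℕ) : ℝ) : EReal) := by
        exact_mod_cast hFnB
      exact (lt_of_le_of_lt hls hlt).ne'
    · intro heq
      set M : ℕ := Fn xb + 1 with hM
      have freq : ∃ᶠ t in Filter.atTop, ((M : ℝ) : EReal) ≤ (v t : EReal) := by
        rw [Filter.frequently_atTop]
        intro t0
        obtain ⟨y, ⟨n, rfl⟩, hy⟩ := not_bddAbove_iff.mp hb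
          (max ((Finset.range (t0 + 2)).sup (playI mySigma v)) M)
        have hA : (Finset.range (t0 + 2)).sup (playI mySigma v) < playI mySigma v n :=
          lt_of_le_of_lt (le_max_left _ _) hy
        have hMn : M < playI mySigma v n := lt_of_le_of_lt (le_max_right _ _) hy
        have hn : t0 + 2 ≤ n := by
          by_contra hlt
          have : playI mySigma v n ≤ (Finset.range (t0 + 2)).sup (playI mySigma v) :=
            Finset.le_sup (Finset.mem_range.mpr (by omega))
          omega
        obtain ⟨t, rfl⟩ : ∃ t, n = t + 1 := ⟨n - 1, by omega⟩
        refine ⟨t, by omega, ?_⟩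
        rw [playI_mySigma v t] at hMn
        have h4 : (M : ℝ) < v t := by exact_mod_cast Nat.lt_ceil.mp hMn
        exact_mod_cast h4.le
      have hMle : ((M : ℝ) : EReal) ≤
          Filter.limsup (fun t : ℕ => (v t : EReal)) Filter.atTop :=
        Filter.le_limsup_of_frequently_le freq
      rw [← heq] at hMle
      have h5 : ((M : ℝ) : EReal) ≤ (((Fn xb : ℕ) : ℝ) : EReal) := hMle
      have h6 : M ≤ Fn xb := by exact_mod_cast h5
      omega
  · -- Cantor sets
    intro r C hC hcount
    obtain ⟨n, hn⟩ := exists_nat_ge r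
    set J : (ℕ → Bool) → X := fun j => FF (⟨C, hC⟩, n, j) with hJ
    have hJmem : ∀ j, J j ∈ C ∩ {x : X | r ≤ ((Fn x : ℕ) : ℝ)} := by
      intro j
      refine ⟨FFmem (⟨C, hC⟩, n, j), ?_⟩
      have h1 : idx (J j) = n := idx_FF (⟨C, hC⟩, n, j)
      have h2 : n ≤ Fn (J j) := by
        rw [Fn_def]
        simp only
        rw [show idx (J j) = n from h1]
        exact Nat.le_add_right n _
      have h3 : (n : ℝ) ≤ ((Fn (J j) : ℕ) : ℝ) := by exact_mod_cast h2
      exact hn.trans h3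
    have hJinj : Function.Injective J := by
      intro a b hab
      have := FFinj hab
      simpa [hJ] using congrArg (fun p : ι => p.2.2) this
    have hrng : (Set.range J).Countable := hcount.mono (Set.range_subset_iff.mpr hJmem)
    have hcnt2 : Countable (ℕ → Bool) := by
      haveI : Countable (Set.range J) := hrng.to_subtype
      exact Function.Injective.countable
        (f := fun j => (⟨J j, Set.mem_range_self j⟩ : Set.range J))
        (fun a b hab => hJinj (congrArg Subtype.val hab))
    have hc : Cardinal.mk (ℕ → Bool) ≤ Cardinal.aleph0 := Cardinal.mk_le_aleph0
    rw [hBoolc] at hc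
    exact absurd hc (not_le.mpr Cardinal.aleph0_lt_continuum)
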